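/- Fix a finite directed graph G = (V, E) in which every node has at least one incoming edge. Consider a message-passing layer that, given node features x_i ∈ ℝ^D for i ∈ V and edge features e_{ji} ∈ ℝ^{D_E} for (j,i) ∈ E, outputs for every node i the updated feature x'_i = f_upd( x_i , f_agg( { f_msg(x_j, x_i, e_{ji}) : (j,i) ∈ E } ) ), where f_msg : ℝ^{2D + D_E} → ℝ^{D'} and f_upd : ℝ^{D + D'} → ℝ^{D''} are FNN-computable functions and f_agg is the coordinatewise mean, the coordinatewise maximum, or the coordinatewise sum over the (fixed-cardinality) collection of incoming messages. Then the whole layer, viewed as a single function from the concatenation of all node and edge features, ℝ^{|V|·D + |E|·D_E}, to the concatenation of all updated node features, ℝ^{|V|·D''}, is FNN-computable. -/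

import Mathlib

/-- The three kinds of feed-forward layers: affine transformations,
componentwise ReLU, and max-pooling. -/
inductive LayerKind : Type
  | affine
  | relu
  | maxpool

/-- `IsLayerOfKind K f` says that `f : ℝ^m → ℝ^n` is a feed-forward layer of kind `K`:
an affine map `x ↦ A x + b`, the componentwise ReLU (requiring `n = m`), or a
max-pooling over predefined nonempty subsets of the input coordinates. -/
def IsLayerOfKind {m n : ℕ} (K : LayerKind) (f : (Fin m → ℝ) → (Fin n → ℝ)) : Prop :=
  match K with
  | .affine => ∃ (A : Matrix (Fin n) (Fin m) ℝ) (b : Fin n → ℝ), ∀ x, f x = A.mulVec x + b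
  | .relu => ∃ h : n = m, ∀ x j, f x j = max 0 (x (Fin.cast h j))
  | .maxpool => ∃ (P : Fin n → Finset (Fin m)) (hP : ∀ j, (P j).Nonempty),
      ∀ x j, f x j = (P j).sup' (hP j) x

/-- A feed-forward layer is a layer of one of the three kinds. -/
def IsLayer {m n : ℕ} (f : (Fin m → ℝ) → (Fin n → ℝ)) : Prop :=
  ∃ K : LayerKind, IsLayerOfKind K f

/-- `FNNComputes l m n f` says that `f : ℝ^m → ℝ^n` is computed by an `l`-layered
feed-forward neural network, i.e. `f` is a composition of `l` feed-forward layers. -/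
inductive FNNComputes : ℕ → (m : ℕ) → (n : ℕ) → ((Fin m → ℝ) → (Fin n → ℝ)) → Prop
  | id (m : ℕ) : FNNComputes 0 m m id
  | succ {l m k n : ℕ} {f : (Fin m → ℝ) → (Fin k → ℝ)} {g : (Fin k → ℝ) → (Fin n → ℝ)} :
      FNNComputes l m k f → IsLayer g → FNNComputes (l + 1) m n (g ∘ f)

/-- A function is FNN-computable if some feed-forward neural network computes it. -/
def FNNComputable {m n : ℕ} (f : (Fin m → ℝ) → (Fin n → ℝ)) : Prop :=
  ∃ l, FNNComputes l m n f

/-- Composition of a chain of functions `g 0, g 1, …` with compatible dimensions: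
`chainComp d g k = g (k-1) ∘ ⋯ ∘ g 0`. -/
def chainComp (d : ℕ → ℕ) (g : (i : ℕ) → (Fin (d i) → ℝ) → (Fin (d (i + 1)) → ℝ)) :
    (k : ℕ) → (Fin (d 0) → ℝ) → (Fin (d k) → ℝ)
  | 0 => id
  | k + 1 => g k ∘ chainComp d g k

/-- Concatenation of two vectors. -/
def cat {a b : ℕ} (x : Fin a → ℝ) (y : Fin b → ℝ) : Fin (a + b) → ℝ :=
  Fin.addCases (motive := fun _ => ℝ) x y

/-- The three aggregation functions allowed in a message-passing layer:
coordinatewise mean, maximum, and sum. -/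
inductive AggKind : Type
  | mean
  | max
  | sum

/-- Coordinatewise aggregation of a (nonempty, fixed-cardinality) finite collection
of vectors `v p ∈ ℝ^D`, `p ∈ s`, by mean, max, or sum. -/
noncomputable def aggregate (K : AggKind) {D : ℕ} {ι : Type} (s : Finset ι)
    (hs : s.Nonempty) (v : ι → Fin D → ℝ) : Fin D → ℝ :=
  match K with
  | .mean => fun c => (∑ p ∈ s, v p c) / (s.card : ℝ)
  | .max => fun c => s.sup' hs (fun p => v p c)
  | .sum => fun c => ∑ p ∈ s, v p c

/-- A message-passing layer on a fixed finite directed graph `(V, E)` in which every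
node has at least one incoming edge: node `i` is updated to
`x'_i = f_upd (x_i, f_agg {f_msg (x_j, x_i, e_{ji}) : (j,i) ∈ E})`. -/
noncomputable def mpLayer {V : Type} [DecidableEq V] (E : Finset (V × V))
    (hE : ∀ i : V, (E.filter fun p => p.2 = i).Nonempty)
    {D DE D' D'' : ℕ}
    (fmsg : (Fin (D + D + DE) → ℝ) → (Fin D' → ℝ))
    (fupd : (Fin (D + D') → ℝ) → (Fin D'' → ℝ))
    (K : AggKind)
    (x : V → Fin D → ℝ) (eF : {p : V × V // p ∈ E} → Fin DE → ℝ)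
    (i : V) : Fin D'' → ℝ :=
  fupd (cat (x i)
    (aggregate K (E.filter fun p => p.2 = i).attach
      (Finset.attach_nonempty_iff.mpr (hE i))
      (fun p => fmsg (cat (cat (x p.1.1) (x i)) (eF ⟨p.1, (Finset.mem_filter.mp p.2).1⟩)))))

section Aux

open Finset

lemma cat_left {a b : ℕ} (x : Fin a → ℝ) (y : Fin b → ℝ) (i : Fin a) :
    cat x y (Fin.castAdd b i) = x i := by
  simp [cat]

lemma cat_right {a b : ℕ} (x : Fin a → ℝ) (y : Fin b → ℝ) (j : Fin b) :
    cat x y (Fin.natAdd a j) = y j := by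
  simp [cat]

lemma cat_apply {a b : ℕ} (x : Fin a → ℝ) (y : Fin b → ℝ) (j : Fin (a + b)) :
    cat x y j = if h : (j : ℕ) < a then x ⟨j, h⟩ else y ⟨(j : ℕ) - a, by omega⟩ := by
  by_cases h : (j : ℕ) < a
  · rw [dif_pos h]
    have h2 : j = Fin.castAdd b ⟨j, h⟩ := by ext; rfl
    conv_lhs => rw [h2]
    rw [cat_left]
  · rw [dif_neg h]
    have h2 : j = Fin.natAdd a ⟨(j:ℕ) - a, by omega⟩ := by ext; simp; omega
    conv_lhs => rw [h2]
    rw [cat_right]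

lemma fnn_of_layer {m n : ℕ} {f : (Fin m → ℝ) → (Fin n → ℝ)} (h : IsLayer f) :
    FNNComputable f :=
  ⟨1, FNNComputes.succ (FNNComputes.id m) h⟩

lemma fnn_congr {m n : ℕ} {f g : (Fin m → ℝ) → (Fin n → ℝ)} (h : FNNComputable f)
    (hfg : ∀ x, f x = g x) : FNNComputable g := by
  have : f = g := funext hfg
  rwa [this] at h

lemma fnn_id {m : ℕ} : FNNComputable (id : (Fin m → ℝ) → (Fin m → ℝ)) := ⟨0, .id m⟩

lemma fnn_computes_comp {l2 k n : ℕ} {g : (Fin k → ℝ) → (Fin n → ℝ)}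
    (hg : FNNComputes l2 k n g) :
    ∀ {m : ℕ} {f : (Fin m → ℝ) → (Fin k → ℝ)}, FNNComputable f → FNNComputable (g ∘ f) := by
  induction hg with
  | id => intro m f hf; simpa using hf
  | succ h1 h2 ih =>
    intro m f hf
    obtain ⟨l, hl⟩ := ih hf
    refine ⟨l + 1, ?_⟩
    have h3 := FNNComputes.succ hl h2
    simpa [Function.comp_assoc] using h3

lemma fnn_comp {m k n : ℕ} {g : (Fin k → ℝ) → (Fin n → ℝ)} {f : (Fin m → ℝ) → (Fin k → ℝ)}
    (hg : FNNComputable g) (hf : FNNComputable f) : FNNComputable (g ∘ f) := by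
  obtain ⟨l2, hg⟩ := hg
  exact fnn_computes_comp hg hf

lemma fnn_comp' {m k n : ℕ} {g : (Fin k → ℝ) → (Fin n → ℝ)} {f : (Fin m → ℝ) → (Fin k → ℝ)}
    (hg : FNNComputable g) (hf : FNNComputable f) : FNNComputable (fun x => g (f x)) :=
  fnn_comp hg hf

lemma fnn_affine {m n : ℕ} (A : Matrix (Fin n) (Fin m) ℝ) (b : Fin n → ℝ) :
    FNNComputable (fun x j => (∑ i, A j i * x i) + b j) := by
  apply fnn_of_layer
  exact ⟨.affine, A, b, fun x => by
    funext j; simp [Matrix.mulVec, dotProduct]⟩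

lemma fnn_of_affine {m n : ℕ} {f : (Fin m → ℝ) → (Fin n → ℝ)}
    (A : Matrix (Fin n) (Fin m) ℝ) (b : Fin n → ℝ)
    (h : ∀ x j, f x j = (∑ i, A j i * x i) + b j) : FNNComputable f :=
  fnn_congr (fnn_affine A b) (fun x => (funext (fun j => (h x j).symm)))

lemma fnn_reindex {m n : ℕ} (σ : Fin n → Fin m) :
    FNNComputable (fun (x : Fin m → ℝ) j => x (σ j)) := by
  apply fnn_of_affine (fun j i => if i = σ j then 1 else 0) 0
  intro x j
  simp [Finset.sum_ite_eq]

end Aux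

section Par

/-- Left projection of a concatenated vector. -/
def pleft {a b : ℕ} (x : Fin (a + b) → ℝ) : Fin a → ℝ := fun i => x (Fin.castAdd b i)

/-- Right projection of a concatenated vector. -/
def pright {a b : ℕ} (x : Fin (a + b) → ℝ) : Fin b → ℝ := fun j => x (Fin.natAdd a j)

/-- Apply `f` on the first block, identity on the second. -/
def parId {a b : ℕ} (f : (Fin a → ℝ) → (Fin b → ℝ)) (c : ℕ) :
    (Fin (a + c) → ℝ) → (Fin (b + c) → ℝ) :=
  fun x => cat (f (pleft x)) (pright x)

lemma pleft_cat {a b : ℕ} (x : Fin a → ℝ) (y : Fin b → ℝ) : pleft (cat x y) = x := by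
  funext i; simp [pleft, cat_left]

lemma pright_cat {a b : ℕ} (x : Fin a → ℝ) (y : Fin b → ℝ) : pright (cat x y) = y := by
  funext j; simp [pright, cat_right]

lemma cat_pleft_pright {a b : ℕ} (x : Fin (a + b) → ℝ) : cat (pleft x) (pright x) = x := by
  funext j
  induction j using Fin.addCases with
  | left j => rw [cat_left]; rfl
  | right j => rw [cat_right]; rfl

lemma parId_layer {a b : ℕ} {g : (Fin a → ℝ) → (Fin b → ℝ)} (hg : IsLayer g) (c : ℕ) :
    FNNComputable (parId g c) := by
  obtain ⟨K, hK⟩ := hg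
  cases K with
  | affine =>
    obtain ⟨A, bb, hA⟩ := hK
    apply fnn_of_affine
      (fun j => Fin.addCases (motive := fun _ => Fin (a + c) → ℝ)
        (fun j' => Fin.addCases (motive := fun _ => ℝ) (A j') 0)
        (fun j' i => if i = Fin.natAdd a j' then 1 else 0) j)
      (cat bb 0)
    intro x j
    induction j using Fin.addCases with
    | left j =>
      simp only [Fin.addCases_left, parId, cat_left, hA, Pi.add_apply, Matrix.mulVec,
        dotProduct, Fin.sum_univ_add, Fin.addCases_right, zero_mul,
        Finset.sum_const_zero, add_zero]
      simp [pleft]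
    | right j =>
      simp only [Fin.addCases_right, parId, cat_right, ite_mul, one_mul, zero_mul,
        Finset.sum_ite_eq, Finset.mem_univ, if_true, cat_apply]
      simp [pright, Pi.zero_apply]
  | relu =>
    obtain ⟨hba, hg⟩ := hK
    subst hba
    have fin_cast_self : ∀ {nn : ℕ} (h : nn = nn) (j : Fin nn), Fin.cast h j = j := by
      intro nn h j; ext; rfl
    have h1 : FNNComputable (fun (x : Fin (b + c) → ℝ) =>
        cat x (fun j => - x (Fin.natAdd b j))) := by
      apply fnn_of_affine
        (fun j => Fin.addCases (motive := fun _ => Fin (b + c) → ℝ)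
          (fun j' i => if i = j' then 1 else 0)
          (fun j' i => if i = Fin.natAdd b j' then -1 else 0) j)
        0
      intro x j
      induction j using Fin.addCases with
      | left j => simp [cat_left, Finset.sum_ite_eq']
      | right j => simp [cat_right, Finset.sum_ite_eq']
    have h2 : FNNComputable (fun (y : Fin (b + c + c) → ℝ) j => max 0 (y j)) := by
      apply fnn_of_layer
      exact ⟨.relu, rfl, fun x j => rfl⟩
    have h3 : FNNComputable (fun (y : Fin (b + c + c) → ℝ) =>
        cat (fun j : Fin b => y (Fin.castAdd c (Fin.castAdd c j)))
          (fun j : Fin c => y (Fin.castAdd c (Fin.natAdd b j)) - y (Fin.natAdd (b + c) j))) := by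
      apply fnn_of_affine
        (fun j => Fin.addCases (motive := fun _ => Fin (b + c + c) → ℝ)
          (fun j' i => if i = Fin.castAdd c (Fin.castAdd c j') then 1 else 0)
          (fun j' i => (if i = Fin.castAdd c (Fin.natAdd b j') then 1 else 0)
            + (if i = Fin.natAdd (b + c) j' then -1 else 0)) j)
        0
      intro y j
      induction j using Fin.addCases with
      | left j => simp [cat_left, Finset.sum_ite_eq']
      | right j =>
        simp only [Fin.addCases_right, cat_right, add_mul, Finset.sum_add_distrib, ite_mul,
          one_mul, zero_mul, neg_mul, neg_one_mul, Finset.sum_ite_eq', Finset.mem_univ, if_true,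
          Pi.zero_apply, add_zero]
        ring
    apply fnn_congr (fnn_comp' h3 (fnn_comp' h2 h1))
    intro x
    funext j
    induction j using Fin.addCases with
    | left j =>
      simp only [parId, cat_left, hg, pleft, fin_cast_self]
    | right j =>
      simp only [parId, cat_right, cat_left, pright]
      have hm := max_zero_sub_max_neg_zero_eq_self (x (Fin.natAdd b j))
      rw [max_comm, max_comm (- x (Fin.natAdd b j)) 0] at hm
      rw [hm]
  | maxpool =>
    obtain ⟨P, hP, hgP⟩ := hK
    apply fnn_of_layer
    refine ⟨.maxpool, fun j => Fin.addCases (motive := fun _ => Finset (Fin (a + c)))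
      (fun j' => (P j').map (Fin.castAddEmb c))
      (fun j' => {Fin.natAdd a j'}) j, ?_, ?_⟩
    · intro j
      induction j using Fin.addCases with
      | left j => simp only [Fin.addCases_left, Finset.map_nonempty]; exact hP j
      | right j => simp
    · intro x j
      induction j using Fin.addCases with
      | left j =>
        simp only [parId, cat_left, Fin.addCases_left, hgP]
        rw [Finset.sup'_map]
        rfl
      | right j =>
        simp only [parId, cat_right, Fin.addCases_right, Finset.sup'_singleton]
        rfl

end Par

section Par2

lemma parId_fnn {a b : ℕ} {f : (Fin a → ℝ) → (Fin b → ℝ)} (hf : FNNComputable f) (c : ℕ) :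
    FNNComputable (parId f c) := by
  obtain ⟨l, hf⟩ := hf
  induction hf with
  | id m =>
    apply fnn_congr fnn_id
    intro x
    simpa [parId] using (cat_pleft_pright x).symm
  | succ h1 h2 ih =>
    apply fnn_congr (fnn_comp (parId_layer h2 c) ih)
    intro x
    simp [parId, Function.comp, pleft_cat, pright_cat]

/-- Apply identity on the first block, `f` on the second. -/
def idPar {a b : ℕ} (c : ℕ) (f : (Fin a → ℝ) → (Fin b → ℝ)) :
    (Fin (c + a) → ℝ) → (Fin (c + b) → ℝ) :=
  fun x => cat (pleft x) (f (pright x))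

lemma idPar_fnn {a b : ℕ} (c : ℕ) {f : (Fin a → ℝ) → (Fin b → ℝ)} (hf : FNNComputable f) :
    FNNComputable (idPar c f) := by
  have hs1 : FNNComputable (fun (x : Fin (c + a) → ℝ) (j : Fin (a + c)) =>
      x (Fin.addCases (motive := fun _ => Fin (c + a)) (Fin.natAdd c) (Fin.castAdd a) j)) :=
    fnn_reindex _
  have hs2 : FNNComputable (fun (y : Fin (b + c) → ℝ) (j : Fin (c + b)) =>
      y (Fin.addCases (motive := fun _ => Fin (b + c)) (Fin.natAdd b) (Fin.castAdd c) j)) :=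
    fnn_reindex _
  apply fnn_congr (fnn_comp' hs2 (fnn_comp' (parId_fnn hf c) hs1))
  intro x
  funext j
  induction j using Fin.addCases with
  | left j =>
    simp [idPar, parId, cat_left, cat_right, pleft, pright,
      Fin.addCases_left, Fin.addCases_right]
  | right j =>
    simp only [idPar, parId, cat_left, cat_right, pleft, pright,
      Fin.addCases_left, Fin.addCases_right]
    congr 1
    funext i
    simp [pleft, pright, Fin.addCases_left]

/-- Appending the value of a computable function of selected coordinates. -/
lemma fnn_append {m q r : ℕ} {f : (Fin q → ℝ) → (Fin r → ℝ)} (hf : FNNComputable f)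
    (σ : Fin q → Fin m) :
    FNNComputable (fun (x : Fin m → ℝ) => cat x (f (fun i => x (σ i)))) := by
  have hs : FNNComputable (fun (x : Fin m → ℝ) (j : Fin (m + q)) =>
      x (Fin.addCases (motive := fun _ => Fin m) id σ j)) := fnn_reindex _
  apply fnn_congr (fnn_comp' (idPar_fnn m hf) hs)
  intro x
  simp only [idPar]
  funext j
  induction j using Fin.addCases with
  | left j => simp [cat_left, pleft, Fin.addCases_left]
  | right j =>
    rw [cat_right, cat_right]
    congr 1
    funext i
    simp [pright, Fin.addCases_right]

end Par2

section Iter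

/-- Iterated appending: append the values of `f` on `t` different selections. -/
lemma fnn_iter_append {m q r : ℕ} {f : (Fin q → ℝ) → (Fin r → ℝ)} (hf : FNNComputable f) :
    ∀ (t : ℕ) (σ : Fin t → Fin q → Fin m),
    FNNComputable (fun (x : Fin m → ℝ) => cat x
      (fun j : Fin (t * r) => f (fun i => x (σ (Fin.divNat j) i)) (Fin.modNat j))) := by
  intro t
  induction t with
  | zero =>
    intro σ
    have h0 : 0 * r = 0 := Nat.zero_mul r
    apply fnn_congr (fnn_reindex (fun j : Fin (m + 0 * r) => (⟨j.1, by omega⟩ : Fin m)))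
    intro x
    funext j
    rw [cat_apply, dif_pos (show (j : ℕ) < m by omega)]
  | succ t ih =>
    intro σ
    have hmul : (t + 1) * r = t * r + r := Nat.succ_mul t r
    have g1 := ih (fun s => σ (Fin.castSucc s))
    have g2 := fnn_append (m := m + t * r) hf
      (fun i => Fin.castAdd (t * r) (σ (Fin.last t) i))
    have g3 := fnn_reindex
      (fun j : Fin (m + (t + 1) * r) => (⟨j.1, by omega⟩ : Fin (m + t * r + r)))
    apply fnn_congr (fnn_comp' g3 (fnn_comp' g2 g1))
    intro x
    funext j
    by_cases h1 : (j : ℕ) < m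
    · rw [cat_apply x _ j, dif_pos h1]
      rw [cat_apply _ _ (⟨j.1, by omega⟩ : Fin (m + t * r + r)),
        dif_pos (show j.1 < m + t * r by omega), cat_apply, dif_pos h1]
    · by_cases h2 : (j : ℕ) < m + t * r
      · rw [cat_apply x _ j, dif_neg h1]
        rw [cat_apply _ _ (⟨j.1, by omega⟩ : Fin (m + t * r + r)),
          dif_pos (show j.1 < m + t * r by omega), cat_apply, dif_neg h1]
        congr 1
      · have hr : 0 < r := by omega
        set s : ℕ := j.1 - m - t * r with hs_def
        have hs : s < r := by omega
        have hrep : j.1 - m = t * r + s := by omega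
        have hdiv : (j.1 - m) / r = t := by
          rw [hrep, Nat.add_comm, Nat.mul_comm, Nat.add_mul_div_left _ _ hr,
            Nat.div_eq_of_lt hs, Nat.zero_add]
        have hmod : (j.1 - m) % r = s := by
          rw [hrep, Nat.add_comm, Nat.mul_comm, Nat.add_mul_mod_self_left,
            Nat.mod_eq_of_lt hs]
        rw [cat_apply x _ j, dif_neg h1]
        rw [cat_apply _ _ (⟨j.1, by omega⟩ : Fin (m + t * r + r)),
          dif_neg (show ¬ j.1 < m + t * r by omega)]
        congr 1
        · funext i
          rw [cat_apply, dif_pos (show ((Fin.castAdd (t * r) (σ (Fin.last t) i)) : ℕ) < m from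
            (σ (Fin.last t) i).isLt)]
          refine congrArg x ?_
          refine Eq.trans (b := σ (Fin.last t) i) (Fin.ext rfl) ?_
          exact congrFun (congrArg σ (Fin.ext
            (show (t : ℕ) = ((j : ℕ) - m) / r from hdiv.symm))) i
        · exact Fin.ext (show (j : ℕ) - (m + t * r) = ((j : ℕ) - m) % r by rw [hmod]; omega)

end Iter

section AggAux

/-- Index of coordinate `c` of block `s` in a concatenation of `n` blocks of size `r`. -/
def mkIdx {n r : ℕ} (s : Fin n) (c : Fin r) : Fin (n * r) :=
  ⟨s * r + c, by
    calc (s : ℕ) * r + c < s * r + r := by omega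
    _ = ((s : ℕ) + 1) * r := (Nat.succ_mul _ _).symm
    _ ≤ n * r := Nat.mul_le_mul_right r s.2⟩

lemma divNat_mkIdx {n r : ℕ} (s : Fin n) (c : Fin r) : Fin.divNat (mkIdx s c) = s := by
  have hr : 0 < r := c.pos
  apply Fin.ext
  show ((s : ℕ) * r + c) / r = s
  rw [Nat.add_comm, Nat.mul_comm, Nat.add_mul_div_left _ _ hr, Nat.div_eq_of_lt c.2,
    Nat.zero_add]

lemma modNat_mkIdx {n r : ℕ} (s : Fin n) (c : Fin r) : Fin.modNat (mkIdx s c) = c := by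
  apply Fin.ext
  show ((s : ℕ) * r + c) % r = c
  rw [Nat.add_comm, Nat.mul_comm, Nat.add_mul_mod_self_left, Nat.mod_eq_of_lt c.2]

lemma aggregate_congr (K : AggKind) {D : ℕ} {ι : Type} (s : Finset ι) (hs : s.Nonempty)
    {v v' : ι → Fin D → ℝ} (h : ∀ p ∈ s, v p = v' p) :
    aggregate K s hs v = aggregate K s hs v' := by
  cases K <;> funext c
  · simp only [aggregate]
    rw [Finset.sum_congr rfl (fun p hp => by rw [h p hp])]
  · simp only [aggregate]
    exact Finset.sup'_congr hs rfl (fun p hp => by rw [h p hp])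
  · simp only [aggregate]
    rw [Finset.sum_congr rfl (fun p hp => by rw [h p hp])]

lemma aggregate_set_congr (K : AggKind) {D : ℕ} {ι : Type} {s t : Finset ι} (h : s = t)
    (hs : s.Nonempty) (ht : t.Nonempty) (v : ι → Fin D → ℝ) :
    aggregate K s hs v = aggregate K t ht v := by
  subst h; rfl

lemma aggregate_map (K : AggKind) {D : ℕ} {ι κ : Type} (s : Finset ι) (e : ι ↪ κ)
    (u : κ → Fin D → ℝ) (hs : s.Nonempty) (ht : (s.map e).Nonempty) :
    aggregate K (s.map e) ht u = aggregate K s hs (fun p => u (e p)) := by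
  cases K <;> funext c <;>
    simp [aggregate, Finset.sum_map, Finset.card_map, Finset.sup'_map, Function.comp]

/-- The incoming edges of node `i`, as a finset of elements of `E`. -/
def incSet {V : Type} [DecidableEq V] (E : Finset (V × V)) (i : V) :
    Finset {p : V × V // p ∈ E} :=
  E.attach.filter (fun q => q.1.2 = i)

lemma incSet_nonempty {V : Type} [DecidableEq V] {E : Finset (V × V)}
    (hE : ∀ i : V, (E.filter fun p => p.2 = i).Nonempty) (i : V) :
    (incSet E i).Nonempty := by
  obtain ⟨p, hp⟩ := hE i
  rw [Finset.mem_filter] at hp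
  refine ⟨⟨p, hp.1⟩, ?_⟩
  simp [incSet, Finset.mem_filter, hp.2]

/-- The embedding from attached incoming edges into attached edges. -/
def incEmb {V : Type} [DecidableEq V] (E : Finset (V × V)) (i : V) :
    {p : V × V // p ∈ E.filter fun p => p.2 = i} ↪ {p : V × V // p ∈ E} :=
  ⟨fun p => ⟨p.1, (Finset.mem_filter.mp p.2).1⟩, by
    intro a b h
    have hv := congrArg (Subtype.val (p := fun p : V × V => p ∈ E)) h
    exact Subtype.ext hv⟩

lemma incSet_eq_map {V : Type} [DecidableEq V] (E : Finset (V × V)) (i : V) :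
    incSet E i = ((E.filter fun p => p.2 = i).attach).map (incEmb E i) := by
  ext q
  simp only [incSet, Finset.mem_filter, Finset.mem_attach, true_and, Finset.mem_map, incEmb,
    Function.Embedding.coeFn_mk]
  constructor
  · intro h
    first
      | exact ⟨⟨q.1, Finset.mem_filter.mpr ⟨q.2, h⟩⟩, Subtype.ext rfl⟩
      | exact ⟨⟨q.1, Finset.mem_filter.mpr ⟨q.2, h⟩⟩, Finset.mem_attach _ _, Subtype.ext rfl⟩
  · first
      | (rintro ⟨a, rfl⟩; exact (Finset.mem_filter.mp a.2).2)
      | (rintro ⟨a, -, rfl⟩; exact (Finset.mem_filter.mp a.2).2)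

lemma mpLayer_eq {V : Type} [DecidableEq V] (E : Finset (V × V))
    (hE : ∀ i : V, (E.filter fun p => p.2 = i).Nonempty)
    {D DE D' D'' : ℕ}
    (fmsg : (Fin (D + D + DE) → ℝ) → (Fin D' → ℝ))
    (fupd : (Fin (D + D') → ℝ) → (Fin D'' → ℝ))
    (K : AggKind)
    (x : V → Fin D → ℝ) (eF : {p : V × V // p ∈ E} → Fin DE → ℝ) (i : V) :
    mpLayer E hE fmsg fupd K x eF i =
      fupd (cat (x i) (aggregate K (incSet E i) (incSet_nonempty hE i)
        (fun q => fmsg (cat (cat (x q.1.1) (x q.1.2)) (eF q))))) := by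
  simp only [mpLayer]
  apply congrArg fupd
  apply congrArg (cat (x i))
  have hne2 : (((E.filter fun p => p.2 = i).attach).map (incEmb E i)).Nonempty := by
    rw [← incSet_eq_map E i]; exact incSet_nonempty hE i
  refine Eq.trans (aggregate_congr K _ (Finset.attach_nonempty_iff.mpr (hE i))
    (v' := fun p => (fun q : {p : V × V // p ∈ E} =>
      fmsg (cat (cat (x q.1.1) (x q.1.2)) (eF q))) (incEmb E i p)) ?_) ?_
  · intro p hp
    have h2 : p.1.2 = i := (Finset.mem_filter.mp p.2).2
    simp only [incEmb, Function.Embedding.coeFn_mk]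
    show _ = fmsg (cat (cat (x p.1.1) (x p.1.2)) (eF ⟨p.1, Finset.mem_of_mem_filter _ p.2⟩))
    rw [h2]
  refine Eq.trans (aggregate_map K _ (incEmb E i)
    (fun q : {p : V × V // p ∈ E} => fmsg (cat (cat (x q.1.1) (x q.1.2)) (eF q)))
    (Finset.attach_nonempty_iff.mpr (hE i)) hne2).symm ?_
  exact aggregate_set_congr K (incSet_eq_map E i).symm hne2 _ _

end AggAux

section HLayer

lemma hfun_layer
    (V : Type) [Fintype V] [DecidableEq V] (E : Finset (V × V))
    (hE : ∀ i : V, (E.filter fun p => p.2 = i).Nonempty)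
    (D DE D' : ℕ) (mIn : ℕ)
    (eIn : ((V × Fin D) ⊕ ({p : V × V // p ∈ E} × Fin DE)) ≃ Fin mIn)
    (N : ℕ) (eE : {p : V × V // p ∈ E} ≃ Fin N)
    (M2 : ℕ) (enc2 : (V × Fin (D + D')) ≃ Fin M2)
    (K : AggKind) :
    IsLayer (fun (w : Fin (mIn + N * D') → ℝ) (j : Fin M2) =>
      Fin.addCases (motive := fun _ => ℝ)
        (fun d => w (Fin.castAdd (N * D') (eIn (Sum.inl ((enc2.symm j).1, d)))))
        (fun c => aggregate K (incSet E (enc2.symm j).1) (incSet_nonempty hE _)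
          (fun q c' => w (Fin.natAdd mIn (mkIdx (eE q) c'))) c)
        ((enc2.symm j).2)) := by
  cases K with
  | sum =>
    refine ⟨.affine, fun j i' =>
      Fin.addCases (motive := fun _ => ℝ)
        (fun d => if i' = Fin.castAdd (N * D') (eIn (Sum.inl ((enc2.symm j).1, d))) then 1 else 0)
        (fun c => ∑ q ∈ incSet E (enc2.symm j).1,
          if i' = Fin.natAdd mIn (mkIdx (eE q) c) then 1 else 0)
        ((enc2.symm j).2), 0, ?_⟩
    intro w
    funext j
    rcases h : enc2.symm j with ⟨i, c⟩
    simp only [h, Pi.add_apply, Pi.zero_apply, add_zero, Matrix.mulVec, dotProduct]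
    induction c using Fin.addCases with
    | left d =>
      simp [Fin.addCases_left, Finset.sum_ite_eq']
    | right c =>
      simp only [Fin.addCases_right, aggregate, Finset.sum_mul, ite_mul, one_mul, zero_mul]
      rw [Finset.sum_comm]
      simp [Finset.sum_ite_eq']
  | mean =>
    refine ⟨.affine, fun j i' =>
      Fin.addCases (motive := fun _ => ℝ)
        (fun d => if i' = Fin.castAdd (N * D') (eIn (Sum.inl ((enc2.symm j).1, d))) then 1 else 0)
        (fun c => ∑ q ∈ incSet E (enc2.symm j).1,
          if i' = Fin.natAdd mIn (mkIdx (eE q) c) then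
            (((incSet E (enc2.symm j).1).card : ℝ))⁻¹ else 0)
        ((enc2.symm j).2), 0, ?_⟩
    intro w
    funext j
    rcases h : enc2.symm j with ⟨i, c⟩
    simp only [h, Pi.add_apply, Pi.zero_apply, add_zero, Matrix.mulVec, dotProduct]
    induction c using Fin.addCases with
    | left d =>
      simp [Fin.addCases_left, Finset.sum_ite_eq']
    | right c =>
      simp only [Fin.addCases_right, aggregate, Finset.sum_mul, ite_mul, one_mul, zero_mul]
      rw [Finset.sum_comm]
      simp only [Finset.sum_ite_eq', Finset.mem_univ, if_true]
      rw [div_eq_inv_mul, Finset.mul_sum]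
  | max =>
    have hinj : ∀ c : Fin D', Function.Injective
        (fun q : {p : V × V // p ∈ E} => Fin.natAdd mIn (mkIdx (eE q) c)) := by
      intro c a b hab
      have hv := congrArg Fin.val hab
      have h1 : (eE a : ℕ) * D' + (c : ℕ) = (eE b : ℕ) * D' + (c : ℕ) := by
        simpa [mkIdx] using hv
      have hD : 0 < D' := c.pos
      have h2 : (eE a : ℕ) = (eE b : ℕ) :=
        Nat.eq_of_mul_eq_mul_right hD (by omega)
      exact eE.injective (Fin.ext h2)
    refine ⟨.maxpool, fun j =>
      Fin.addCases (motive := fun _ => Finset (Fin (mIn + N * D')))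
        (fun d => {Fin.castAdd (N * D') (eIn (Sum.inl ((enc2.symm j).1, d)))})
        (fun c => (incSet E (enc2.symm j).1).map
          ⟨fun q => Fin.natAdd mIn (mkIdx (eE q) c), hinj c⟩)
        ((enc2.symm j).2), ?_, ?_⟩
    · intro j
      rcases h : enc2.symm j with ⟨i, c⟩
      simp only [h]
      induction c using Fin.addCases with
      | left d => simp [Fin.addCases_left]
      | right c =>
        simp only [Fin.addCases_right, Finset.map_nonempty]
        exact incSet_nonempty hE _
    · intro w j
      rcases h : enc2.symm j with ⟨i, c⟩
      simp only [h]
      induction c using Fin.addCases with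
      | left d =>
        simp [Fin.addCases_left, Finset.sup'_singleton]
      | right c =>
        simp only [Fin.addCases_right, aggregate]
        rw [Finset.sup'_map]
        rfl

end HLayer

/-- **A message-passing layer on a fixed graph is FNN-computable (Lemma 3).**
Fix a finite directed graph `(V, E)` in which every node has an incoming edge,
FNN-computable message and update functions `fmsg : ℝ^{D+D+DE} → ℝ^{D'}` and
`fupd : ℝ^{D+D'} → ℝ^{D''}`, and an aggregation kind (mean, max, or sum).
Then the whole layer — viewed, via arbitrary bijective encodings `eIn`, `eOut` of the
node/edge features into coordinates, as a single function from the concatenation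
`ℝ^{|V|·D + |E|·DE}` of all node and edge features to the concatenation `ℝ^{|V|·D''}`
of all updated node features — is FNN-computable. -/
theorem mp_layer_is_fnn_computable
    (V : Type) [Fintype V] [DecidableEq V]
    (E : Finset (V × V))
    (hE : ∀ i : V, (E.filter fun p => p.2 = i).Nonempty)
    (D DE D' D'' : ℕ)
    (fmsg : (Fin (D + D + DE) → ℝ) → (Fin D' → ℝ))
    (fupd : (Fin (D + D') → ℝ) → (Fin D'' → ℝ))
    (hmsg : FNNComputable fmsg) (hupd : FNNComputable fupd)
    (K : AggKind)
    (mIn mOut : ℕ)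
    (eIn : ((V × Fin D) ⊕ ({p : V × V // p ∈ E} × Fin DE)) ≃ Fin mIn)
    (eOut : (V × Fin D'') ≃ Fin mOut) :
    FNNComputable (fun (z : Fin mIn → ℝ) (j : Fin mOut) =>
      mpLayer E hE fmsg fupd K
        (fun i d => z (eIn (Sum.inl (i, d))))
        (fun p d => z (eIn (Sum.inr (p, d))))
        (eOut.symm j).1 (eOut.symm j).2) := by
  classical
  set inputIdx : {p : V × V // p ∈ E} → Fin (D + D + DE) → Fin mIn := fun q =>
    Fin.addCases (motive := fun _ => Fin mIn)
      (Fin.addCases (motive := fun _ => Fin mIn)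
        (fun d => eIn (Sum.inl (q.1.1, d))) (fun d => eIn (Sum.inl (q.1.2, d))))
      (fun d => eIn (Sum.inr (q, d))) with hII
  set N := Fintype.card {p : V × V // p ∈ E} with hN
  set eE : {p : V × V // p ∈ E} ≃ Fin N := Fintype.equivFin _ with heE
  set NV := Fintype.card V with hNV
  set eV : V ≃ Fin NV := Fintype.equivFin V with heV
  set M2 := Fintype.card (V × Fin (D + D')) with hM2
  set enc2 : (V × Fin (D + D')) ≃ Fin M2 := Fintype.equivFin _ with henc2
  have hA := fnn_iter_append hmsg N (fun s => inputIdx (eE.symm s))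
  have hH := fnn_of_layer (hfun_layer V E hE D DE D' mIn eIn N eE M2 enc2 K)
  have hC := fnn_iter_append hupd NV (fun s c => enc2 (eV.symm s, c))
  have hD2 := fnn_reindex (fun j : Fin mOut =>
    Fin.natAdd M2 (mkIdx (eV (eOut.symm j).1) (eOut.symm j).2))
  apply fnn_congr (fnn_comp' hD2 (fnn_comp' hC (fnn_comp' hH hA)))
  intro z
  funext j
  rw [mpLayer_eq]
  simp only []
  rw [cat_right, divNat_mkIdx, modNat_mkIdx, Equiv.symm_apply_apply]
  refine congrFun (congrArg fupd ?_) (eOut.symm j).2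
  funext c
  induction c using Fin.addCases with
  | left d =>
    simp only [Equiv.symm_apply_apply, Fin.addCases_left, cat_left]
  | right c =>
    simp only [Equiv.symm_apply_apply, Fin.addCases_right, cat_right]
    simp only [divNat_mkIdx, modNat_mkIdx, Equiv.symm_apply_apply]
    have hv : ∀ q : {p : V × V // p ∈ E},
        (fun i' => z (inputIdx q i')) = (cat (cat
          (fun d => z (eIn (Sum.inl (q.1.1, d)))) (fun d => z (eIn (Sum.inl (q.1.2, d)))))
          (fun d => z (eIn (Sum.inr (q, d))))) := by
      intro q
      funext i'
      rw [hII]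
      induction i' using Fin.addCases with
      | left i' =>
        simp only [Fin.addCases_left, cat_left]
        induction i' using Fin.addCases with
        | left i'' => simp only [Fin.addCases_left, cat_left]
        | right i'' => simp only [Fin.addCases_right, cat_right]
      | right i' =>
        simp only [Fin.addCases_right, cat_right]
    refine congrFun (aggregate_congr K _ _ ?_) c
    intro q hq
    funext c'
    rw [hv q]
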